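/- Every finite unit interval order (semiorder) has order dimension at most 3. -/
import Mathlib


/-- `L` is a linear extension of the partial order on `α`. -/
def IsLinearExtension {α : Type*} [PartialOrder α] (L : α → α → Prop) : Prop :=
  IsLinearOrder α L ∧ ∀ x y : α, x ≤ y → L x y

/-- The order dimension of `α` is at most `t`: there are `t` linear extensions
whose intersection is the partial order. -/
def DimLE (α : Type*) [PartialOrder α] (t : ℕ) : Prop :=
  ∃ L : Fin t → α → α → Prop, (∀ i, IsLinearExtension (L i)) ∧
    ∀ x y : α, x ≤ y ↔ ∀ i, L i x y

section Aux
variable {α : Type*} [Fintype α] [PartialOrder α]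

open Classical in
/-- value of a candidate chain strictly below `x`. -/
noncomputable def chVal (x : α) (s : Finset α) : ℕ :=
  if (∀ a ∈ s, a < x) ∧ (∀ a ∈ s, ∀ b ∈ s, a ≤ b ∨ b ≤ a) then s.card else 0

/-- rank: size of the longest chain strictly below `x`. -/
noncomputable def bIdx (x : α) : ℕ := Finset.univ.sup (chVal x)

open Classical in
lemma bIdx_mono {x y : α} (h : ∀ a : α, a < x → a < y) : bIdx x ≤ bIdx y := by
  refine Finset.sup_mono_fun ?_
  intro s _
  unfold chVal
  by_cases hs : (∀ a ∈ s, a < x) ∧ (∀ a ∈ s, ∀ b ∈ s, a ≤ b ∨ b ≤ a)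
  · rw [if_pos hs, if_pos ⟨fun a ha => h a (hs.1 a ha), hs.2⟩]
  · rw [if_neg hs]; exact Nat.zero_le _

open Classical in
lemma bIdx_lt {x y : α} (hxy : x < y) : bIdx x < bIdx y := by
  have hne : (Finset.univ : Finset (Finset α)).Nonempty := ⟨∅, Finset.mem_univ _⟩
  obtain ⟨s, -, hs⟩ := Finset.exists_mem_eq_sup Finset.univ hne (chVal x)
  rw [Nat.lt_iff_add_one_le, bIdx, hs]
  by_cases hc : (∀ a ∈ s, a < x) ∧ (∀ a ∈ s, ∀ b ∈ s, a ≤ b ∨ b ≤ a)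
  · have hxs : x ∉ s := fun hx => lt_irrefl x (hc.1 x hx)
    have hcond : (∀ a ∈ insert x s, a < y) ∧
        (∀ a ∈ insert x s, ∀ b ∈ insert x s, a ≤ b ∨ b ≤ a) := by
      constructor
      · intro a ha
        rcases Finset.mem_insert.1 ha with rfl | ha
        · exact hxy
        · exact lt_trans (hc.1 a ha) hxy
      · intro a ha b hb
        rcases Finset.mem_insert.1 ha with ha' | ha' <;> rcases Finset.mem_insert.1 hb with hb' | hb'
        · rw [ha', hb']; exact Or.inl le_rfl
        · rw [ha']; exact Or.inr (le_of_lt (hc.1 b hb'))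
        · rw [hb']; exact Or.inl (le_of_lt (hc.1 a ha'))
        · exact hc.2 a ha' b hb'
    have hle := Finset.le_sup (f := chVal y) (Finset.mem_univ (insert x s))
    rw [chVal, if_pos hcond, Finset.card_insert_of_notMem hxs] at hle
    rw [chVal, if_pos hc]
    exact hle
  · rw [chVal, if_neg hc]
    have hcond : (∀ a ∈ ({x} : Finset α), a < y) ∧
        (∀ a ∈ ({x} : Finset α), ∀ b ∈ ({x} : Finset α), a ≤ b ∨ b ≤ a) := by
      refine ⟨?_, ?_⟩
      · intro a ha; rw [Finset.mem_singleton] at ha; subst ha; exact hxy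
      · intro a ha b hb; rw [Finset.mem_singleton] at ha hb; subst ha; subst hb
        exact Or.inl le_rfl
    have hle := Finset.le_sup (f := chVal y) (Finset.mem_univ ({x} : Finset α))
    rw [chVal, if_pos hcond, Finset.card_singleton] at hle
    exact hle

open Classical in
lemma bIdx_le_succ (l : α → ℝ) (hl : ∀ x y : α, x < y ↔ l x + 1 < l y)
    {x y : α} (hnxy : ¬ x < y) : bIdx y ≤ bIdx x + 1 := by
  have hyx : l y ≤ l x + 1 := by
    by_contra hc
    push_neg at hc
    exact hnxy ((hl x y).2 hc)
  refine Finset.sup_le ?_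
  intro s _
  unfold chVal
  by_cases hc : (∀ a ∈ s, a < y) ∧ (∀ a ∈ s, ∀ b ∈ s, a ≤ b ∨ b ≤ a)
  · rw [if_pos hc]
    rcases Finset.eq_empty_or_nonempty s with rfl | hsne
    · simp
    obtain ⟨m, hm, hmax⟩ := Finset.exists_max_image s l hsne
    have hsub : ∀ a ∈ s.erase m, a < m := by
      intro a ha
      obtain ⟨hne, has⟩ := Finset.mem_erase.1 ha
      rcases hc.2 a has m hm with h1 | h1
      · exact lt_of_le_of_ne h1 hne
      · rcases lt_or_eq_of_le h1 with h2 | h2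
        · have h3 := (hl m a).1 h2
          have h4 := hmax a has
          exact absurd h4 (by linarith only [h3])
        · exact absurd h2.symm hne
    have hcond : (∀ a ∈ s.erase m, a < m) ∧
        (∀ a ∈ s.erase m, ∀ b ∈ s.erase m, a ≤ b ∨ b ≤ a) := by
      exact ⟨hsub, fun a ha b hb => hc.2 a (Finset.mem_of_mem_erase ha) b (Finset.mem_of_mem_erase hb)⟩
    have h1 : s.card - 1 ≤ bIdx m := by
      have hle := Finset.le_sup (f := chVal m) (Finset.mem_univ (s.erase m))
      rw [chVal, if_pos hcond, Finset.card_erase_of_mem hm] at hle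
      exact hle
    have h2 : bIdx m ≤ bIdx x := by
      refine bIdx_mono ?_
      intro a ham
      have h3 := (hl a m).1 ham
      have h4 := (hl m y).1 (hc.1 m hm)
      exact (hl a x).2 (by linarith only [h3, h4, hyx])
    have h5 : 1 ≤ s.card := Finset.card_pos.2 hsne
    omega
  · rw [if_neg hc]; exact Nat.zero_le _

end Aux
section Rel
variable {α : Type*} [Fintype α] [PartialOrder α]

/-- Tie-broken linear order on `α` by `l`, then by an injection `e`. -/
def precR (l : α → ℝ) (e : α → ℕ) (x y : α) : Prop :=
  l x < l y ∨ (l x = l y ∧ e x < e y)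

/-- class index of a pair (which of the three linear extensions reverses it). -/
noncomputable def cIdx (x y : α) : Fin 3 :=
  if bIdx x = bIdx y then 0 else if Even (min (bIdx x) (bIdx y)) then 1 else 2

/-- The strict relation underlying the `i`-th linear extension. -/
def QR (l : α → ℝ) (e : α → ℕ) (i : Fin 3) (x y : α) : Prop :=
  x < y ∨ (¬ x < y ∧ ¬ y < x ∧
    ((cIdx x y = i ∧ precR l e y x) ∨ (cIdx x y ≠ i ∧ precR l e x y)))

variable {l : α → ℝ} {e : α → ℕ}

lemma precR_le {x y : α} (h : precR l e x y) : l x ≤ l y := by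
  rcases h with h | ⟨h, -⟩
  · exact le_of_lt h
  · exact le_of_eq h

lemma precR_asymm {x y : α} (h1 : precR l e x y) (h2 : precR l e y x) : False := by
  rcases h1 with h1 | ⟨h1, h1'⟩ <;> rcases h2 with h2 | ⟨h2, h2'⟩ <;>
    first
      | exact absurd h2 (by linarith only [h1])
      | omega
      | (exact absurd h1 (by linarith only [h2]))
      | (exact absurd (h1 ▸ h2) (lt_irrefl _))

lemma precR_total (he : Function.Injective e) {x y : α} (h : x ≠ y) :
    precR l e x y ∨ precR l e y x := by
  rcases lt_trichotomy (l x) (l y) with h1 | h1 | h1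
  · exact Or.inl (Or.inl h1)
  · rcases Nat.lt_or_ge (e x) (e y) with h2 | h2
    · exact Or.inl (Or.inr ⟨h1, h2⟩)
    · rcases Nat.lt_or_ge (e y) (e x) with h3 | h3
      · exact Or.inr (Or.inr ⟨h1.symm, h3⟩)
      · exact absurd (he (Nat.le_antisymm h3 h2)) h
  · exact Or.inr (Or.inl h1)

lemma precR_trans {x y z : α} (h1 : precR l e x y) (h2 : precR l e y z) :
    precR l e x z := by
  rcases h1 with h1 | ⟨h1, h1'⟩ <;> rcases h2 with h2 | ⟨h2, h2'⟩
  · exact Or.inl (lt_trans h1 h2)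
  · exact Or.inl (h2 ▸ h1)
  · exact Or.inl (h1 ▸ h2)
  · exact Or.inr ⟨h1.trans h2, Nat.lt_trans h1' h2'⟩

lemma cIdx_symm (x y : α) : cIdx x y = cIdx y x := by
  unfold cIdx
  rcases eq_or_ne (bIdx x) (bIdx y) with h | h
  · rw [if_pos h, if_pos h.symm]
  · rw [if_neg h, if_neg (Ne.symm h), min_comm]

lemma QR_irrefl (i : Fin 3) (x : α) : ¬ QR l e i x x := by
  intro h
  rcases h with h | ⟨-, -, h⟩
  · exact lt_irrefl _ h
  · rcases h with ⟨-, h⟩ | ⟨-, h⟩ <;> exact precR_asymm h h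

lemma QR_asymm {i : Fin 3} {x y : α} (h1 : QR l e i x y) (h2 : QR l e i y x) : False := by
  rcases h1 with h1 | ⟨hn1, hn1', hc1⟩
  · rcases h2 with h2 | ⟨hn2, hn2', -⟩
    · exact lt_asymm h1 h2
    · exact hn2' h1
  · rcases h2 with h2 | ⟨hn2, hn2', hc2⟩
    · exact hn1' h2
    · have hsym := cIdx_symm (α := α) x y
      rcases hc1 with ⟨e1, p1⟩ | ⟨e1, p1⟩ <;> rcases hc2 with ⟨e2, p2⟩ | ⟨e2, p2⟩
      · exact precR_asymm p1 p2
      · exact e2 (hsym ▸ e1)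
      · exact e1 (hsym.symm ▸ e2)
      · exact precR_asymm p1 p2

lemma QR_total (he : Function.Injective e) (i : Fin 3) {x y : α} (h : x ≠ y) :
    QR l e i x y ∨ QR l e i y x := by
  by_cases h1 : x < y
  · exact Or.inl (Or.inl h1)
  by_cases h2 : y < x
  · exact Or.inr (Or.inl h2)
  have hsym := cIdx_symm (α := α) x y
  rcases precR_total he h with hp | hp
  · by_cases hc : cIdx x y = i
    · exact Or.inr (Or.inr ⟨h2, h1, Or.inl ⟨hsym ▸ hc, hp⟩⟩)
    · exact Or.inl (Or.inr ⟨h1, h2, Or.inr ⟨hc, hp⟩⟩)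
  · by_cases hc : cIdx x y = i
    · exact Or.inl (Or.inr ⟨h1, h2, Or.inl ⟨hc, hp⟩⟩)
    · exact Or.inr (Or.inr ⟨h2, h1, Or.inr ⟨fun hh => hc (hsym ▸ hh), hp⟩⟩)

end Rel
section Core
variable {α : Type*} [Fintype α] [PartialOrder α] {l : α → ℝ} {e : α → ℕ}

lemma cIdx_eq_zero {x y : α} (h : bIdx x = bIdx y) : cIdx x y = 0 := by
  unfold cIdx; rw [if_pos h]

lemma cIdx_eq_ne {x y : α} (h : bIdx x ≠ bIdx y) :
    cIdx x y = if Even (min (bIdx x) (bIdx y)) then 1 else 2 := by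
  unfold cIdx; rw [if_neg h]

lemma bIdx_mono_of_le (hl : ∀ x y : α, x < y ↔ l x + 1 < l y)
    {x y : α} (h : l x ≤ l y) : bIdx x ≤ bIdx y := by
  refine bIdx_mono fun a ha => (hl a y).2 ?_
  have := (hl a x).1 ha
  linarith only [this, h]

lemma caseA (hl : ∀ x y : α, x < y ↔ l x + 1 < l y) {i : Fin 3} {a b c : α}
    (pab : precR l e a b) (pbc : precR l e b c) (pac : precR l e a c)
    (Qab : QR l e i a b) (Qbc : QR l e i b c) (Qca : QR l e i c a) : False := by
  have lab := precR_le pab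
  have lbc := precR_le pbc
  have lac := precR_le pac
  -- analyze the decreasing arc c → a
  rcases Qca with h | ⟨hn1, hn2, hcc⟩
  · exact absurd ((hl c a).1 h) (by linarith only [lac])
  rcases hcc with ⟨hceq, -⟩ | ⟨-, hp⟩
  swap
  · exact precR_asymm hp pac
  have hlca : l c ≤ l a + 1 := by
    by_contra hcon
    push_neg at hcon
    exact hn2 ((hl a c).2 hcon)
  -- a,b and b,c are incomparable, and their pairs are not in class i
  have hnab : ¬ a < b := fun h => by
    have := (hl a b).1 h; linarith only [this, lbc, hlca]
  have hnbc : ¬ b < c := fun h => by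
    have := (hl b c).1 h; linarith only [this, lab, hlca]
  have hne2 : cIdx a b ≠ i := by
    rcases Qab with h | ⟨-, -, hcc2⟩
    · exact absurd h hnab
    rcases hcc2 with ⟨-, hp2⟩ | ⟨hne2, -⟩
    · exact absurd (precR_asymm hp2 pab) id
    · exact hne2
  have hne3 : cIdx b c ≠ i := by
    rcases Qbc with h | ⟨-, -, hcc2⟩
    · exact absurd h hnbc
    rcases hcc2 with ⟨-, hp2⟩ | ⟨hne3, -⟩
    · exact absurd (precR_asymm hp2 pbc) id
    · exact hne3
  have hac_eq : cIdx a c = i := (cIdx_symm a c).trans hceq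
  have m1 : bIdx a ≤ bIdx b := bIdx_mono_of_le hl lab
  have m2 : bIdx b ≤ bIdx c := bIdx_mono_of_le hl lbc
  have m3 : bIdx c ≤ bIdx a + 1 := bIdx_le_succ l hl hn2
  rcases eq_or_ne (bIdx a) (bIdx c) with hec | hec
  · have hb_eq : bIdx a = bIdx b := by omega
    exact hne2 ((cIdx_eq_zero hb_eq).trans ((cIdx_eq_zero hec).symm.trans hac_eq))
  · rcases (by omega : bIdx b = bIdx a ∨ bIdx b = bIdx c) with hb | hb
    · have h4 : cIdx b c = cIdx a c := by
        rw [cIdx_eq_ne (by omega), cIdx_eq_ne (by omega)]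
        have hm : min (bIdx b) (bIdx c) = min (bIdx a) (bIdx c) := by omega
        rw [hm]
      exact hne3 (h4.trans hac_eq)
    · have h4 : cIdx a b = cIdx a c := by
        rw [cIdx_eq_ne (by omega), cIdx_eq_ne (by omega)]
        have hm : min (bIdx a) (bIdx b) = min (bIdx a) (bIdx c) := by omega
        rw [hm]
      exact hne2 (h4.trans hac_eq)

lemma caseB (hl : ∀ x y : α, x < y ↔ l x + 1 < l y) {i : Fin 3} {a b c : α}
    (pab : precR l e a b) (pbc : precR l e b c) (pac : precR l e a c)
    (Qac : QR l e i a c) (Qcb : QR l e i c b) (Qba : QR l e i b a) : False := by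
  have lab := precR_le pab
  have lbc := precR_le pbc
  have lac := precR_le pac
  -- analyze the decreasing arcs b → a and c → b
  rcases Qba with h | ⟨hn1, hn2, hcc⟩
  · exact absurd ((hl b a).1 h) (by linarith only [lab])
  rcases hcc with ⟨heq1, -⟩ | ⟨-, hp⟩
  swap
  · exact precR_asymm hp pab
  rcases Qcb with h | ⟨hn3, hn4, hcc2⟩
  · exact absurd ((hl c b).1 h) (by linarith only [lbc])
  rcases hcc2 with ⟨heq2, -⟩ | ⟨-, hp⟩
  swap
  · exact precR_asymm hp pbc
  have hab_eq : cIdx a b = i := (cIdx_symm a b).trans heq1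
  have hbc_eq : cIdx b c = i := (cIdx_symm b c).trans heq2
  have m1 : bIdx a ≤ bIdx b := bIdx_mono_of_le hl lab
  have m2 : bIdx b ≤ bIdx c := bIdx_mono_of_le hl lbc
  have s1 : bIdx b ≤ bIdx a + 1 := bIdx_le_succ l hl hn2
  have s2 : bIdx c ≤ bIdx b + 1 := bIdx_le_succ l hl hn4
  rcases eq_or_ne (bIdx a) (bIdx b) with h1 | h1 <;>
    rcases eq_or_ne (bIdx b) (bIdx c) with h2 | h2
  · -- all three ranks equal : pair (a,c) is in class i = 0, contradicting arc a → c
    have hi : i = 0 := hab_eq.symm.trans (cIdx_eq_zero h1)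
    have hac : bIdx a = bIdx c := h1.trans h2
    have hnac : ¬ a < c := fun h => by have := bIdx_lt h; omega
    rcases Qac with h | ⟨-, -, hcc3⟩
    · exact hnac h
    rcases hcc3 with ⟨-, hp⟩ | ⟨hne, -⟩
    · exact precR_asymm hp pac
    · exact hne ((cIdx_eq_zero hac).trans hi.symm)
  · have h3 : cIdx b c = 0 := hbc_eq.trans (hab_eq.symm.trans (cIdx_eq_zero h1))
    rw [cIdx_eq_ne h2] at h3
    by_cases hev : Even (min (bIdx b) (bIdx c))
    · rw [if_pos hev] at h3; exact absurd h3 (by decide)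
    · rw [if_neg hev] at h3; exact absurd h3 (by decide)
  · have h3 : cIdx a b = 0 := hab_eq.trans (hbc_eq.symm.trans (cIdx_eq_zero h2))
    rw [cIdx_eq_ne h1] at h3
    by_cases hev : Even (min (bIdx a) (bIdx b))
    · rw [if_pos hev] at h3; exact absurd h3 (by decide)
    · rw [if_neg hev] at h3; exact absurd h3 (by decide)
  · have hb1 : bIdx b = bIdx a + 1 := by omega
    have hma : min (bIdx a) (bIdx b) = bIdx a := by omega
    have hmb : min (bIdx b) (bIdx c) = bIdx b := by omega
    have h3 : cIdx a b = cIdx b c := hab_eq.trans hbc_eq.symm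
    rw [cIdx_eq_ne h1, cIdx_eq_ne h2, hma, hmb] at h3
    by_cases hev : Even (bIdx a)
    · have hev2 : ¬ Even (bIdx b) := fun hh => (Nat.even_add_one.1 (hb1 ▸ hh)) hev
      rw [if_pos hev, if_neg hev2] at h3
      exact absurd h3 (by decide)
    · have hev2 : Even (bIdx b) := hb1 ▸ Nat.even_add_one.2 hev
      rw [if_neg hev, if_pos hev2] at h3
      exact absurd h3 (by decide)

end Core
section Final
variable {α : Type*} [Fintype α] [PartialOrder α] {l : α → ℝ} {e : α → ℕ}

lemma QR_no_cycle (hl : ∀ x y : α, x < y ↔ l x + 1 < l y) (he : Function.Injective e)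
    {i : Fin 3} {x y z : α}
    (h1 : QR l e i x y) (h2 : QR l e i y z) (h3 : QR l e i z x) : False := by
  have hxy : x ≠ y := fun hh => QR_irrefl i y (hh ▸ h1)
  have hyz : y ≠ z := fun hh => QR_irrefl i z (hh ▸ h2)
  have hzx : z ≠ x := fun hh => QR_irrefl i x (hh ▸ h3)
  rcases precR_total (l := l) he hxy with pxy | pyx <;>
    rcases precR_total (l := l) he hyz with pyz | pzy <;>
    rcases precR_total (l := l) he (Ne.symm hzx) with pxz | pzx
  · exact caseA hl pxy pyz pxz h1 h2 h3
  · exact precR_asymm (precR_trans pxy pyz) pzx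
  · exact caseB hl pxz pzy pxy h1 h2 h3
  · exact caseA hl pzx pxy pzy h3 h1 h2
  · exact caseB hl pyx pxz pyz h2 h3 h1
  · exact caseA hl pyz pzx pyx h2 h3 h1
  · exact precR_asymm (precR_trans pxz pzy) pyx
  · exact caseB hl pzy pyx pzx h3 h1 h2

lemma QR_trans (hl : ∀ x y : α, x < y ↔ l x + 1 < l y) (he : Function.Injective e)
    {i : Fin 3} {x y z : α} (h1 : QR l e i x y) (h2 : QR l e i y z) : QR l e i x z := by
  by_cases hxz : x = z
  · subst hxz
    exact (QR_asymm h1 h2).elim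
  rcases QR_total he i hxz with h | h
  · exact h
  · exact (QR_no_cycle hl he h1 h2 h).elim

end Final

/-- Every finite unit interval order (semiorder) has dimension at most 3. -/
theorem stmt_5 {α : Type*} [Fintype α] [PartialOrder α]
    (h : ∃ l : α → ℝ, ∀ x y : α, x < y ↔ l x + 1 < l y) :
    DimLE α 3 := by
  classical
  obtain ⟨l, hl⟩ := h
  set e : α → ℕ := fun x => ((Fintype.equivFin α) x : ℕ) with he_def
  have he : Function.Injective e := fun a b hab =>
    (Fintype.equivFin α).injective (Fin.val_injective hab)
  refine ⟨fun i x y => x = y ∨ QR l e i x y, fun i => ⟨?_, ?_⟩, ?_⟩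
  · refine { refl := fun a => Or.inl rfl, trans := ?_, antisymm := ?_, total := ?_ }
    · rintro a b c (rfl | hab) hbc
      · exact hbc
      rcases hbc with rfl | hbc
      · exact Or.inr hab
      · exact Or.inr (QR_trans hl he hab hbc)
    · rintro a b (rfl | hab) hba
      · rfl
      rcases hba with rfl | hba
      · rfl
      · exact (QR_asymm hab hba).elim
    · intro a b
      by_cases hab : a = b
      · exact Or.inl (Or.inl hab)
      rcases QR_total he i hab with h' | h'
      · exact Or.inl (Or.inr h')
      · exact Or.inr (Or.inr h')
  · intro x y hxy
    rcases hxy.lt_or_eq with h' | h'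
    · exact Or.inr (Or.inl h')
    · exact Or.inl h'
  · intro x y
    constructor
    · intro hxy i
      rcases hxy.lt_or_eq with h' | h'
      · exact Or.inr (Or.inl h')
      · exact Or.inl h'
    · intro hall
      by_cases hxy : x = y
      · exact hxy ▸ le_refl x
      have hQ : ∀ i, QR l e i x y := fun i => (hall i).resolve_left hxy
      by_cases hlt : x < y
      · exact le_of_lt hlt
      exfalso
      have h1 := hQ (cIdx x y)
      have h2 := hQ (cIdx x y + 1)
      have hne : cIdx x y ≠ cIdx x y + 1 := by
        have : ∀ j : Fin 3, j ≠ j + 1 := by decide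
        exact this _
      rcases h1 with h' | ⟨-, -, hc1⟩
      · exact hlt h'
      rcases hc1 with ⟨-, hp1⟩ | ⟨hh, -⟩
      swap
      · exact hh rfl
      rcases h2 with h' | ⟨-, -, hc2⟩
      · exact hlt h'
      rcases hc2 with ⟨hh, -⟩ | ⟨-, hp2⟩
      · exact hne hh
      · exact precR_asymm hp1 hp2
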